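/- Let N_d(X_1,X_2,q;h) be the number of integers n with X_1 < n ≤ X_2, gcd(n,q)=1, and ξ(n) ≡ 0 (mod d), where ξ(n) = ∏_i σ(n + h_i q) and σ(n) = ∏_{p^k | n} p. Then for squarefree d coprime to q, N_d = (φ(q)/q)(U_d/d^k)(X_2 − X_1) + O(τ(q) U_d), with U_d = ∏_{p|d} u_p(h) and τ the divisor function. -/

import Mathlib

open Finset ArithmeticFunction

/-- σ(m) = ∏_{p prime, p^k ∣ m} p, with the convention σ(0) = 0. -/
def sig (k : ℕ) (m : ℤ) : ℤ :=
  if m = 0 then 0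
  else ∏ p ∈ m.natAbs.primeFactors.filter (fun p : ℕ => ((p : ℕ) : ℤ) ^ k ∣ m), (p : ℤ)



lemma int_prime {p : ℕ} (hp : p.Prime) : Prime (p : ℤ) :=
  Int.prime_iff_natAbs_prime.mpr (by simpa using hp)

lemma prime_dvd_sig_iff {k : ℕ} (hk : 1 ≤ k) {p : ℕ} (hp : p.Prime) (m : ℤ) :
    (p : ℤ) ∣ sig k m ↔ (p : ℤ) ^ k ∣ m := by
  rcases eq_or_ne m 0 with rfl | hm
  · simp [sig]
  · rw [sig, if_neg hm, Prime.dvd_finset_prod_iff (int_prime hp)]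
    constructor
    · rintro ⟨a, ha, hdvd⟩
      rw [mem_filter] at ha
      have hap : a.Prime := Nat.prime_of_mem_primeFactors ha.1
      have : p = a := (Nat.prime_dvd_prime_iff_eq hp hap).mp (Int.natCast_dvd_natCast.mp hdvd)
      exact this ▸ ha.2
    · intro hdvd
      have hpm : (p : ℤ) ∣ m := (dvd_pow_self ((p:ℤ)) (by omega : k ≠ 0)).trans hdvd
      refine ⟨p, mem_filter.mpr ⟨Nat.mem_primeFactors.mpr ⟨hp, ?_, by simpa using hm⟩, hdvd⟩, dvd_rfl⟩
      simpa using Int.natAbs_dvd_natAbs.mpr hpm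


lemma dvd_prod_sig_iff {k jj : ℕ} (hk : 1 ≤ k) {d : ℕ} (hd : Squarefree d) (v : Fin jj → ℤ) (n : ℤ) :
    (d : ℤ) ∣ ∏ i, sig k (n + v i) ↔ ∀ p ∈ d.primeFactors, ∃ i, (p:ℤ)^k ∣ n + v i := by
  constructor
  · intro hdvd p hp
    have hpp := Nat.prime_of_mem_primeFactors hp
    have h1 : (p : ℤ) ∣ ∏ i, sig k (n + v i) :=
      dvd_trans (Int.natCast_dvd_natCast.mpr (Nat.dvd_of_mem_primeFactors hp)) hdvd
    obtain ⟨i, -, hi⟩ := (Prime.dvd_finset_prod_iff (int_prime hpp) _).mp h1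
    exact ⟨i, (prime_dvd_sig_iff hk hpp _).mp hi⟩
  · intro hall
    have : ((∏ p ∈ d.primeFactors, p : ℕ) : ℤ) ∣ ∏ i, sig k (n + v i) := by
      push_cast
      refine Finset.prod_dvd_of_coprime ?_ ?_
      · intro a ha b hb hab
        exact (Nat.isCoprime_iff_coprime).mpr
          ((Nat.coprime_primes (Nat.prime_of_mem_primeFactors ha)
            (Nat.prime_of_mem_primeFactors hb)).mpr (by exact_mod_cast hab))
      · intro p hp
        obtain ⟨i, hi⟩ := hall p hp
        exact ((prime_dvd_sig_iff hk (Nat.prime_of_mem_primeFactors hp) _).mpr hi).trans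
          (Finset.dvd_prod_of_mem _ (mem_univ i))
    rwa [Nat.prod_primeFactors_of_squarefree hd] at this


lemma class_count {M : ℕ} (hM : 0 < M) (a b : ℤ) (hab : a ≤ b) (x : ZMod M) :
    |(((Finset.Ioc a b).filter (fun n : ℤ => ((n : ZMod M) = x))).card : ℚ) - ((b : ℚ) - a)/M| ≤ 1 := by
  haveI : NeZero M := ⟨hM.ne'⟩
  set v : ℤ := (x.val : ℤ) with hv
  have hx : ((v : ℤ) : ZMod M) = x := by
    rw [hv, Int.cast_natCast]; exact ZMod.natCast_rightInverse x
  have hset : (Finset.Ioc a b).filter (fun n : ℤ => ((n : ZMod M) = x))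
      = (Finset.Ioc a b).filter (fun n : ℤ => n ≡ v [ZMOD M]) := by
    apply Finset.filter_congr; intro n _
    rw [← hx]
    simpa using (ZMod.intCast_eq_intCast_iff n v M)
  rw [hset]
  have hM' : (0:ℤ) < (M:ℤ) := by exact_mod_cast hM
  have hMQ : (0:ℚ) < (M:ℚ) := by exact_mod_cast hM
  have hcard := Int.Ioc_filter_modEq_card a b hM' v
  push_cast at hcard
  have hmono : ⌊((a:ℚ) - (v:ℚ)) / (M:ℚ)⌋ ≤ ⌊((b:ℚ) - (v:ℚ)) / (M:ℚ)⌋ := by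
    apply Int.floor_le_floor
    have : (a:ℚ) ≤ (b:ℚ) := by exact_mod_cast hab
    exact div_le_div_of_nonneg_right (by linarith) hMQ.le |>.trans_eq rfl
  rw [max_eq_left (by omega)] at hcard
  have hcardQ : (((Finset.Ioc a b).filter (fun n : ℤ => n ≡ v [ZMOD M])).card : ℚ)
      = (⌊((b:ℚ) - v) / M⌋ : ℚ) - (⌊((a:ℚ) - v) / M⌋ : ℚ) := by
    exact_mod_cast congrArg (fun z : ℤ => (z : ℚ)) hcard
  rw [hcardQ]
  have f1 : (⌊((b:ℚ) - v) / M⌋ : ℚ) ≤ ((b:ℚ) - v) / M := Int.floor_le _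
  have f2 : ((b:ℚ) - v) / M - 1 < (⌊((b:ℚ) - v) / M⌋ : ℚ) := Int.sub_one_lt_floor _
  have f3 : (⌊((a:ℚ) - v) / M⌋ : ℚ) ≤ ((a:ℚ) - v) / M := Int.floor_le _
  have f4 : ((a:ℚ) - v) / M - 1 < (⌊((a:ℚ) - v) / M⌋ : ℚ) := Int.sub_one_lt_floor _
  have hdiff : ((b:ℚ) - v) / M - ((a:ℚ) - v) / M = ((b:ℚ) - a) / M := by
    field_simp
    ring
  rw [abs_le]
  constructor <;> linarith [hdiff]


lemma count_residues (k : ℕ) {jj : ℕ} (q d e : ℕ) (hd : Squarefree d)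
    (he : 0 < e) (hcop_ed : Nat.Coprime e (d^k)) (hcop_dq : Nat.Coprime d q) (h : Fin jj → ℤ)
    [NeZero (e * d^k)] :
    ((Finset.univ.filter (fun x : ZMod (e * d^k) =>
        (ZMod.castHom (dvd_mul_right e (d^k)) (ZMod e) x = 0 ∧
         ∀ p ∈ d.primeFactors, ∃ i, (ZMod.cast x : ZMod (p^k)) = ((-(h i * q) : ℤ) : ZMod (p^k))))).card : ℕ)
      = ∏ p ∈ d.primeFactors, (Finset.univ.image fun i : Fin jj => ((h i : ZMod (p ^ k)))).card := by
  classical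
  haveI : NeZero e := ⟨he.ne'⟩
  set ι := {p : ℕ // p ∈ d.primeFactors} with hι
  set a : ι → ℕ := fun p => (p : ℕ)^k with ha
  have hpairwise : Pairwise (Function.onFun Nat.Coprime a) := by
    intro p₁ p₂ hne
    have h1 := Nat.prime_of_mem_primeFactors p₁.2
    have h2 := Nat.prime_of_mem_primeFactors p₂.2
    exact Nat.Coprime.pow _ _ ((Nat.coprime_primes h1 h2).mpr (fun hc => hne (Subtype.ext hc)))
  have heq : (∏ i : ι, a i) = d ^ k := by
    rw [ha, Finset.prod_coe_sort d.primeFactors (fun p => p^k), Finset.prod_pow,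
      Nat.prod_primeFactors_of_squarefree hd]
  haveI instNZ : ∀ i : ι, NeZero (a i) := fun i =>
    ⟨pow_ne_zero k (Nat.prime_of_mem_primeFactors i.2).ne_zero⟩
  set Φ : ZMod (e * d^k) ≃+* ZMod e × (Π i : ι, ZMod (a i)) :=
    (ZMod.chineseRemainder hcop_ed).trans (RingEquiv.prodCongr (RingEquiv.refl _)
      ((ZMod.ringEquivCongr heq.symm).trans (ZMod.prodEquivPi a hpairwise))) with hΦ
  have fact0 : ∀ x : ZMod (e * d^k), (Φ x).1 = ZMod.castHom (dvd_mul_right e (d^k)) (ZMod e) x := by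
    intro x
    have := RingHom.ext_zmod ((RingHom.fst (ZMod e) _).comp Φ.toRingHom)
      (ZMod.castHom (dvd_mul_right e (d^k)) (ZMod e))
    exact RingHom.congr_fun this x
  have hdvd : ∀ i : ι, a i ∣ e * d ^ k := fun i =>
    dvd_trans (pow_dvd_pow_of_dvd (Nat.dvd_of_mem_primeFactors i.2) k) (dvd_mul_left _ _)
  have factp : ∀ (i : ι) (x : ZMod (e * d^k)),
      (Φ x).2 i = ZMod.castHom (hdvd i) (ZMod (a i)) x := by
    intro i x
    have := RingHom.ext_zmod ((Pi.evalRingHom (fun i : ι => ZMod (a i)) i).comp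
      ((RingHom.snd (ZMod e) (Π i : ι, ZMod (a i))).comp Φ.toRingHom))
      (ZMod.castHom (hdvd i) (ZMod (a i)))
    exact RingHom.congr_fun this x
  -- T i : target finsets
  set T : ∀ i : ι, Finset (ZMod (a i)) := fun i =>
    Finset.univ.image (fun idx : Fin jj => ((-(h idx * q) : ℤ) : ZMod (a i))) with hT
  have key : (Finset.univ.filter (fun x : ZMod (e * d^k) =>
        (ZMod.castHom (dvd_mul_right e (d^k)) (ZMod e) x = 0 ∧
         ∀ p ∈ d.primeFactors, ∃ i, (ZMod.cast x : ZMod (p^k)) = ((-(h i * q) : ℤ) : ZMod (p^k))))).card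
      = (Finset.univ.filter (fun y : ZMod e × (Π i : ι, ZMod (a i)) =>
          y.1 = 0 ∧ ∀ i : ι, y.2 i ∈ T i)).card := by
    apply Finset.card_bij' (fun x _ => Φ x) (fun y _ => Φ.symm y)
    · intro x hx
      rw [mem_filter] at hx ⊢
      refine ⟨mem_univ _, ?_, ?_⟩
      · rw [fact0]; exact hx.2.1
      · intro i
        rw [factp, hT]
        simp only [mem_image, mem_univ, true_and]
        obtain ⟨idx, hidx⟩ := hx.2.2 i.1 i.2
        exact ⟨idx, by rw [ZMod.castHom_apply]; exact hidx.symm⟩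
    · intro y hy
      rw [mem_filter] at hy ⊢
      refine ⟨mem_univ _, ?_, ?_⟩
      · rw [← fact0 (Φ.symm y), RingEquiv.apply_symm_apply]
        exact hy.2.1
      · intro p hp
        have := hy.2.2 ⟨p, hp⟩
        rw [hT] at this
        simp only [mem_image, mem_univ, true_and] at this
        obtain ⟨idx, hidx⟩ := this
        refine ⟨idx, ?_⟩
        have := factp ⟨p, hp⟩ (Φ.symm y)
        rw [ZMod.castHom_apply] at this
        rw [show ((ZMod.cast (Φ.symm y) : ZMod (p^k))) = (Φ (Φ.symm y)).2 ⟨p, hp⟩ from this.symm,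
          RingEquiv.apply_symm_apply]
        exact hidx.symm
    · intro x _; exact Φ.symm_apply_apply x
    · intro y _; exact Φ.apply_symm_apply y
  rw [key]
  have hsplit : (Finset.univ.filter (fun y : ZMod e × (Π i : ι, ZMod (a i)) =>
          y.1 = 0 ∧ ∀ i : ι, y.2 i ∈ T i))
      = (Finset.univ.filter (fun z : ZMod e => z = 0)) ×ˢ
        (Finset.univ.filter (fun b : Π i : ι, ZMod (a i) => ∀ i : ι, b i ∈ T i)) := by
    rw [← Finset.univ_product_univ]
    exact Finset.filter_product (fun z : ZMod e => z = 0) (fun b : (Π i : ι, ZMod (a i)) => ∀ i : ι, b i ∈ T i)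
  have h0 : (Finset.univ.filter (fun z : ZMod e => z = 0)) = {(0 : ZMod e)} := by
    ext z; simp
  have hpi : (Finset.univ.filter (fun b : Π i : ι, ZMod (a i) => ∀ i : ι, b i ∈ T i))
      = Fintype.piFinset T := by
    ext b; simp [Fintype.mem_piFinset]
  rw [hsplit, Finset.card_product, h0, Finset.card_singleton, one_mul, hpi,
    Fintype.card_piFinset]
  -- now ∏ i : ι, (T i).card = ∏ p ∈ primeFactors, card(image h-cast)
  rw [← Finset.prod_coe_sort d.primeFactors
    (fun p => (Finset.univ.image fun i : Fin jj => ((h i : ZMod (p ^ k)))).card)]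
  apply Finset.prod_congr rfl
  intro i _
  -- card of image of shifted/scaled set equals card of image of cast
  have hprime := Nat.prime_of_mem_primeFactors i.2
  have hcop : Nat.Coprime q ((i:ℕ)^k) :=
    ((Nat.Coprime.coprime_dvd_left (Nat.dvd_of_mem_primeFactors i.2) hcop_dq).pow_left k).symm
  have hunit : IsUnit ((q : ZMod ((i:ℕ)^k))) := (ZMod.isUnit_iff_coprime q _).mpr hcop
  have hunit' : IsUnit (-(q : ZMod ((i:ℕ)^k))) := hunit.neg
  have himg : T i = Finset.image (fun z => (-(q : ZMod ((i:ℕ)^k))) * z)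
      (Finset.univ.image fun idx : Fin jj => ((h idx : ZMod ((i:ℕ)^k)))) := by
    rw [hT, Finset.image_image]
    apply Finset.image_congr
    intro idx _
    simp only [Function.comp_apply]
    push_cast
    ring
  rw [himg, Finset.card_image_of_injective _ (hunit'.mul_right_injective)]


lemma cond_iff (k : ℕ) {jj : ℕ} (q d e : ℕ) (h : Fin jj → ℤ) (n : ℤ) :
    ((e:ℤ) ∣ n ∧ ∀ p ∈ d.primeFactors, ∃ i, ((p:ℤ))^k ∣ n + h i * q) ↔
      (ZMod.castHom (dvd_mul_right e (d^k)) (ZMod e) ((n : ZMod (e*d^k))) = 0 ∧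
       ∀ p ∈ d.primeFactors, ∃ i,
         (ZMod.cast ((n : ZMod (e*d^k))) : ZMod (p^k)) = ((-(h i * q) : ℤ) : ZMod (p^k))) := by
  have h1 : ZMod.castHom (dvd_mul_right e (d^k)) (ZMod e) ((n : ZMod (e*d^k))) = (n : ZMod e) :=
    map_intCast _ n
  have h2 : ∀ p ∈ d.primeFactors,
      (ZMod.cast ((n : ZMod (e*d^k))) : ZMod (p^k)) = (n : ZMod (p^k)) := by
    intro p hp
    have hdvd : p^k ∣ e * d^k :=
      dvd_trans (pow_dvd_pow_of_dvd (Nat.dvd_of_mem_primeFactors hp) k) (dvd_mul_left _ _)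
    rw [← ZMod.castHom_apply (h := hdvd), map_intCast]
  constructor
  · rintro ⟨hdvd, hall⟩
    refine ⟨by rw [h1]; exact (ZMod.intCast_zmod_eq_zero_iff_dvd n e).mpr hdvd, ?_⟩
    intro p hp
    obtain ⟨i, hi⟩ := hall p hp
    refine ⟨i, ?_⟩
    rw [h2 p hp]
    have : ((n + h i * q : ℤ) : ZMod (p^k)) = 0 := by
      apply (ZMod.intCast_zmod_eq_zero_iff_dvd _ _).mpr
      exact_mod_cast hi
    push_cast at this ⊢
    linear_combination this
  · rintro ⟨h0, hall⟩
    refine ⟨(ZMod.intCast_zmod_eq_zero_iff_dvd n e).mp (by rw [← h1]; exact h0), ?_⟩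
    intro p hp
    obtain ⟨i, hi⟩ := hall p hp
    rw [h2 p hp] at hi
    refine ⟨i, ?_⟩
    have : ((n + h i * q : ℤ) : ZMod (p^k)) = 0 := by
      push_cast at hi ⊢
      linear_combination hi
    have := (ZMod.intCast_zmod_eq_zero_iff_dvd _ _).mp this
    exact_mod_cast this


lemma moebius_indicator (q : ℕ) (hq : 0 < q) (n : ℤ) :
    (if Int.gcd n q = 1 then (1:ℤ) else 0)
      = ∑ e ∈ q.divisors.filter (fun e : ℕ => (e:ℤ) ∣ n), moebius e := by
  classical
  have hg : Int.gcd n q ≠ 0 := by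
    simp only [Int.gcd, Int.natAbs_natCast]
    intro hc
    exact hq.ne' (Nat.eq_zero_of_gcd_eq_zero_right hc)
  have hset : q.divisors.filter (fun e : ℕ => (e:ℤ) ∣ n) = (Int.gcd n q).divisors := by
    ext e
    simp only [mem_filter, Nat.mem_divisors]
    constructor
    · rintro ⟨⟨heq, -⟩, hen⟩
      refine ⟨Nat.dvd_gcd ?_ (by simpa using heq), hg⟩
      simpa using Int.natAbs_dvd_natAbs.mpr hen
    · rintro ⟨hegcd, -⟩
      have h1 : e ∣ n.natAbs := hegcd.trans (Nat.gcd_dvd_left _ _)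
      have h2 : e ∣ q := hegcd.trans (by simpa [Int.gcd] using Nat.gcd_dvd_right n.natAbs q)
      exact ⟨⟨h2, hq.ne'⟩, by simpa using Int.natAbs_dvd_natAbs.mp (by simpa using h1)⟩
  rw [hset]
  have := @coe_mul_zeta_apply ℤ _ moebius (Int.gcd n q)
  rw [moebius_mul_coe_zeta] at this
  rw [← this, one_apply]


lemma totient_moebius_div (q : ℕ) (hq : 0 < q) :
    ∑ e ∈ q.divisors, (moebius e : ℚ)/e = q.totient / q := by
  have key : ∀ n > 0, ∑ x ∈ n.divisorsAntidiagonal, (moebius x.1 : ℤ) * x.2 = (Nat.totient n : ℤ) := by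
    apply (sum_eq_iff_sum_mul_moebius_eq (R := ℤ) (f := fun n => (n.totient : ℤ))
      (g := fun n => (n : ℤ))).mp
    intro n _
    exact_mod_cast congrArg (fun m : ℕ => (m : ℤ)) (Nat.sum_totient n)
  have hq' := key q hq
  rw [Nat.sum_divisorsAntidiagonal (f := fun a b => (moebius a : ℤ) * b)] at hq'
  have hqQ : ((q.totient : ℚ)) = ∑ e ∈ q.divisors, (moebius e : ℚ) * ((q/e : ℕ) : ℚ) := by
    have := (congrArg (fun z : ℤ => (z : ℚ)) hq').symm
    push_cast at this
    push_cast
    convert this using 2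
    rw [← Int.natCast_div, Int.cast_natCast]
  rw [eq_div_iff (by exact_mod_cast hq.ne' : (q:ℚ) ≠ 0)]
  rw [Finset.sum_mul, hqQ]
  apply Finset.sum_congr rfl
  intro e he
  obtain ⟨hdvd, -⟩ := Nat.mem_divisors.mp he
  have he0 : (e : ℚ) ≠ 0 := by
    have := Nat.pos_of_mem_divisors he
    exact_mod_cast this.ne'
  rw [Nat.cast_div_charZero hdvd]
  field_simp


lemma per_e (k : ℕ) {jj : ℕ} (q d e : ℕ) (hd : Squarefree d) (he : 0 < e)
    (hcop_ed : Nat.Coprime e (d^k)) (hcop_dq : Nat.Coprime d q) (h : Fin jj → ℤ)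
    (a b : ℤ) (hab : a ≤ b) :
    abs (((((Finset.Ioc a b).filter (fun n : ℤ =>
          (∀ p ∈ d.primeFactors, ∃ i, ((p:ℤ))^k ∣ n + h i * q) ∧ (e:ℤ) ∣ n)).card : ℚ)
      - (∏ p ∈ d.primeFactors,
          ((Finset.univ.image fun i : Fin jj => ((h i : ZMod (p ^ k)))).card : ℚ))
        * ((b:ℚ) - a) / (e * d^k)))
      ≤ ∏ p ∈ d.primeFactors,
          ((Finset.univ.image fun i : Fin jj => ((h i : ZMod (p ^ k)))).card : ℚ) := by
  classical
  have hd0 : 0 < d := Nat.pos_of_ne_zero hd.ne_zero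
  have hM : 0 < e * d^k := Nat.mul_pos he (pow_pos hd0 k)
  haveI : NeZero (e * d^k) := ⟨hM.ne'⟩
  set M := e * d^k with hMdef
  set S : Finset (ZMod M) := Finset.univ.filter (fun x : ZMod M =>
        (ZMod.castHom (dvd_mul_right e (d^k)) (ZMod e) x = 0 ∧
         ∀ p ∈ d.primeFactors, ∃ i, (ZMod.cast x : ZMod (p^k)) = ((-(h i * q) : ℤ) : ZMod (p^k)))) with hS
  have hScard : (S.card : ℚ) = ∏ p ∈ d.primeFactors,
      ((Finset.univ.image fun i : Fin jj => ((h i : ZMod (p ^ k)))).card : ℚ) := by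
    rw [hS, count_residues k q d e hd he hcop_ed hcop_dq h]
    push_cast
    rfl
  have hfil : (Finset.Ioc a b).filter (fun n : ℤ =>
        (∀ p ∈ d.primeFactors, ∃ i, ((p:ℤ))^k ∣ n + h i * q) ∧ (e:ℤ) ∣ n)
      = (Finset.Ioc a b).filter (fun n : ℤ => ((n : ZMod M) ∈ S)) := by
    apply Finset.filter_congr
    intro n _
    rw [hS, Finset.mem_filter]
    simp only [Finset.mem_univ, true_and]
    rw [← cond_iff k q d e h n, and_comm]
  rw [hfil]
  have hfib : (((Finset.Ioc a b).filter (fun n : ℤ => ((n : ZMod M) ∈ S))).card : ℚ)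
      = ∑ x ∈ S, ((((Finset.Ioc a b).filter (fun n : ℤ => ((n : ZMod M) ∈ S))).filter
          (fun n : ℤ => (n : ZMod M) = x)).card : ℚ) := by
    exact_mod_cast congrArg (fun m : ℕ => (m : ℚ))
      (Finset.card_eq_sum_card_fiberwise (fun n hn => (Finset.mem_filter.mp hn).2))
  have hfib2 : ∀ x ∈ S, ((Finset.Ioc a b).filter (fun n : ℤ => ((n : ZMod M) ∈ S))).filter
          (fun n : ℤ => (n : ZMod M) = x)
        = (Finset.Ioc a b).filter (fun n : ℤ => ((n : ZMod M) = x)) := by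
    intro x hx
    rw [Finset.filter_filter]
    apply Finset.filter_congr
    intro n _
    constructor
    · rintro ⟨-, hh⟩; exact hh
    · intro hh; exact ⟨hh ▸ hx, hh⟩
  rw [hfib, ← hScard]
  have key : |(∑ x ∈ S, ((((Finset.Ioc a b).filter (fun n : ℤ => ((n : ZMod M) ∈ S))).filter
          (fun n : ℤ => (n : ZMod M) = x)).card : ℚ)) - (S.card : ℚ) * ((b:ℚ) - a) / (e * d^k)|
      ≤ (S.card : ℚ) := by
    have hsum : (S.card : ℚ) * ((b:ℚ) - a) / (e * d^k) = ∑ _x ∈ S, ((b:ℚ) - a) / M := by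
      rw [Finset.sum_const, nsmul_eq_mul]
      have hMQ : (M:ℚ) = (e:ℚ) * (d:ℚ)^k := by rw [hMdef]; push_cast; ring
      rw [hMQ, mul_div_assoc]
    rw [hsum, ← Finset.sum_sub_distrib]
    refine (Finset.abs_sum_le_sum_abs _ _).trans ?_
    have : ∀ x ∈ S, |((((Finset.Ioc a b).filter (fun n : ℤ => ((n : ZMod M) ∈ S))).filter
          (fun n : ℤ => (n : ZMod M) = x)).card : ℚ) - ((b:ℚ) - a) / M| ≤ 1 := by
      intro x hx
      rw [hfib2 x hx]
      exact class_count hM a b hab x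
    calc ∑ x ∈ S, |((((Finset.Ioc a b).filter (fun n : ℤ => ((n : ZMod M) ∈ S))).filter
          (fun n : ℤ => (n : ZMod M) = x)).card : ℚ) - ((b:ℚ) - a) / M|
        ≤ ∑ _x ∈ S, (1:ℚ) := Finset.sum_le_sum this
      _ = S.card := by simp
  exact key

/-- For squarefree d coprime to q,
N_d(X₁,X₂,q;h) = (φ(q)/q)(U_d/d^k)(X₂-X₁) + O_{j,k}(τ(q) U_d). -/
theorem stmt_15 (k j : ℕ) (hk : 2 ≤ k) (hj : 1 ≤ j) :
    ∃ C : ℝ, 0 < C ∧ ∀ (q d : ℕ) (h : Fin j → ℤ) (X₁ X₂ : ℝ),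
      0 < q → Squarefree d → Nat.Coprime d q → 0 ≤ X₁ → X₁ < X₂ →
      |(((Finset.Ioc ⌊X₁⌋ ⌊X₂⌋).filter fun n =>
            Int.gcd n q = 1 ∧ (d : ℤ) ∣ ∏ i, sig k (n + h i * q)).card : ℝ)
          - (q.totient : ℝ) / q * ((∏ p ∈ d.primeFactors,
              ((Finset.univ.image fun i => ((h i : ZMod (p ^ k)))).card : ℝ)) / (d : ℝ) ^ k)
            * (X₂ - X₁)|
        ≤ C * (q.divisors.card : ℝ) * ∏ p ∈ d.primeFactors,
            ((Finset.univ.image fun i => ((h i : ZMod (p ^ k)))).card : ℝ) := by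
  classical
  refine ⟨2, two_pos, ?_⟩
  intro q d h X₁ X₂ hq hd hdq hX₁ hX
  set a := ⌊X₁⌋ with hadef
  set b := ⌊X₂⌋ with hbdef
  have hab : a ≤ b := Int.floor_le_floor hX.le
  have hd0 : 0 < d := Nat.pos_of_ne_zero hd.ne_zero
  set U : ℕ := ∏ p ∈ d.primeFactors,
    (Finset.univ.image fun i : Fin j => ((h i : ZMod (p ^ k)))).card with hU
  have hUQ : (U:ℚ) = ∏ p ∈ d.primeFactors,
      ((Finset.univ.image fun i : Fin j => ((h i : ZMod (p ^ k)))).card : ℚ) := by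
    rw [hU]; push_cast; rfl
  have hUR : (U:ℝ) = ∏ p ∈ d.primeFactors,
      ((Finset.univ.image fun i : Fin j => ((h i : ZMod (p ^ k)))).card : ℝ) := by
    rw [hU]; push_cast; rfl
  -- Step 1 : rewrite the divisibility condition
  set Q : ℤ → Prop := fun n => ∀ p ∈ d.primeFactors, ∃ i, ((p:ℤ))^k ∣ n + h i * q with hQdef
  have hQfil : (Finset.Ioc a b).filter (fun n : ℤ =>
        Int.gcd n q = 1 ∧ (d : ℤ) ∣ ∏ i, sig k (n + h i * q))
      = (Finset.Ioc a b).filter (fun n : ℤ => Int.gcd n q = 1 ∧ Q n) := by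
    apply Finset.filter_congr
    intro n _
    exact and_congr_right (fun _ =>
      dvd_prod_sig_iff (le_trans one_le_two hk) hd (fun i => h i * q) n)
  -- Step 2 : Möbius decomposition
  set A : ℕ → ℕ := fun e => ((Finset.Ioc a b).filter (fun n : ℤ =>
      Q n ∧ (e:ℤ) ∣ n)).card with hA
  have hN : ((((Finset.Ioc a b).filter (fun n : ℤ =>
        Int.gcd n q = 1 ∧ (d : ℤ) ∣ ∏ i, sig k (n + h i * q))).card : ℤ))
      = ∑ e ∈ q.divisors, (moebius e : ℤ) * (A e : ℤ) := by
    rw [hQfil]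
    have h1 : (Finset.Ioc a b).filter (fun n : ℤ => Int.gcd n q = 1 ∧ Q n)
        = ((Finset.Ioc a b).filter Q).filter (fun n : ℤ => Int.gcd n q = 1) := by
      rw [Finset.filter_filter]
      apply Finset.filter_congr
      intro n _
      exact and_comm
    rw [h1, ← Finset.sum_boole]
    have h2 : ∀ n ∈ (Finset.Ioc a b).filter Q,
        (if Int.gcd n q = 1 then (1:ℤ) else 0)
          = ∑ e ∈ q.divisors, (if (e:ℤ) ∣ n then (moebius e : ℤ) else 0) := by
      intro n _
      rw [moebius_indicator q hq n, Finset.sum_filter]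
    rw [Finset.sum_congr rfl h2, Finset.sum_comm]
    apply Finset.sum_congr rfl
    intro e _
    rw [← Finset.sum_filter, Finset.filter_filter, Finset.sum_const, nsmul_eq_mul]
    rw [mul_comm]
  have hNQ : ((((Finset.Ioc a b).filter (fun n : ℤ =>
        Int.gcd n q = 1 ∧ (d : ℤ) ∣ ∏ i, sig k (n + h i * q))).card : ℚ))
      = ∑ e ∈ q.divisors, (moebius e : ℚ) * (A e : ℚ) := by
    exact_mod_cast hN
  -- Step 3 : per-divisor estimates
  have hAe : ∀ e ∈ q.divisors,
      |(A e : ℚ) - (U:ℚ) * ((b:ℚ) - a) / ((e:ℚ) * (d:ℚ)^k)| ≤ (U:ℚ) := by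
    intro e he
    have he0 : 0 < e := Nat.pos_of_mem_divisors he
    have hcop_ed : Nat.Coprime e (d^k) :=
      ((hdq.coprime_dvd_right (Nat.dvd_of_mem_divisors he)).symm.pow_right k)
    have := per_e k q d e hd he0 hcop_ed hdq h a b hab
    rw [← hUQ] at this
    exact this
  -- Step 4 : the main-term sum
  have hq0 : ((q:ℚ)) ≠ 0 := by exact_mod_cast hq.ne'
  have hmainsum : ∑ e ∈ q.divisors, (moebius e : ℚ) * ((U:ℚ) * ((b:ℚ) - a) / ((e:ℚ) * (d:ℚ)^k))
      = (q.totient : ℚ)/q * ((U:ℚ)/(d:ℚ)^k) * ((b:ℚ) - a) := by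
    have hterm : ∀ e ∈ q.divisors,
        (moebius e : ℚ) * ((U:ℚ) * ((b:ℚ) - a) / ((e:ℚ) * (d:ℚ)^k))
          = ((moebius e : ℚ)/e) * ((U:ℚ)/(d:ℚ)^k * ((b:ℚ) - a)) := by
      intro e he
      have he0 : ((e:ℚ)) ≠ 0 := by
        exact_mod_cast (Nat.pos_of_mem_divisors he).ne'
      have hdk0 : ((d:ℚ))^k ≠ 0 := by
        apply pow_ne_zero; exact_mod_cast hd0.ne'
      field_simp
    rw [Finset.sum_congr rfl hterm, ← Finset.sum_mul, totient_moebius_div q hq]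
    ring
  -- Step 5 : error estimate in ℚ
  have hmu : ∀ e : ℕ, |(moebius e : ℚ)| ≤ 1 := by
    intro e
    by_cases hsq : Squarefree e
    · rw [moebius_apply_of_squarefree hsq]
      push_cast
      rw [abs_pow, abs_neg, abs_one, one_pow]
    · rw [moebius_eq_zero_of_not_squarefree hsq]
      simp
  have hstep : |(∑ e ∈ q.divisors, (moebius e : ℚ) * (A e : ℚ))
        - (q.totient : ℚ)/q * ((U:ℚ)/(d:ℚ)^k) * ((b:ℚ) - a)|
      ≤ (q.divisors.card : ℚ) * (U:ℚ) := by
    rw [← hmainsum, ← Finset.sum_sub_distrib]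
    refine (Finset.abs_sum_le_sum_abs _ _).trans ?_
    have hbd : ∀ e ∈ q.divisors,
        |(moebius e : ℚ) * (A e : ℚ) - (moebius e : ℚ) * ((U:ℚ) * ((b:ℚ) - a) / ((e:ℚ) * (d:ℚ)^k))|
          ≤ (U:ℚ) := by
      intro e he
      rw [← mul_sub, abs_mul]
      calc |(moebius e : ℚ)| * |(A e : ℚ) - (U:ℚ) * ((b:ℚ) - a) / ((e:ℚ) * (d:ℚ)^k)|
          ≤ 1 * (U:ℚ) := by
            apply mul_le_mul (hmu e) (hAe e he) (abs_nonneg _) zero_le_one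
        _ = (U:ℚ) := one_mul _
    calc ∑ e ∈ q.divisors, |(moebius e : ℚ) * (A e : ℚ)
            - (moebius e : ℚ) * ((U:ℚ) * ((b:ℚ) - a) / ((e:ℚ) * (d:ℚ)^k))|
        ≤ ∑ _e ∈ q.divisors, (U:ℚ) := Finset.sum_le_sum hbd
      _ = (q.divisors.card : ℚ) * (U:ℚ) := by rw [Finset.sum_const, nsmul_eq_mul]
  have h4 : |((((Finset.Ioc a b).filter (fun n : ℤ =>
        Int.gcd n q = 1 ∧ (d : ℤ) ∣ ∏ i, sig k (n + h i * q))).card : ℚ))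
        - (q.totient : ℚ)/q * ((U:ℚ)/(d:ℚ)^k) * ((b:ℚ) - a)|
      ≤ (q.divisors.card : ℚ) * (U:ℚ) := by
    rw [hNQ]; exact hstep
  -- Step 6 : move to ℝ
  have h4R : |((((Finset.Ioc a b).filter (fun n : ℤ =>
        Int.gcd n q = 1 ∧ (d : ℤ) ∣ ∏ i, sig k (n + h i * q))).card : ℝ))
        - (q.totient : ℝ)/q * ((U:ℝ)/(d:ℝ)^k) * ((b:ℝ) - a)|
      ≤ (q.divisors.card : ℝ) * (U:ℝ) := by
    have h4' := (Rat.cast_le (K := ℝ)).mpr h4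
    push_cast at h4'
    exact h4'
  rw [← hUR]
  -- basic inequalities
  have hc₁0 : (0:ℝ) ≤ (q.totient : ℝ)/q * ((U:ℝ)/(d:ℝ)^k) :=
    mul_nonneg (div_nonneg (Nat.cast_nonneg _) (Nat.cast_nonneg _))
      (div_nonneg (Nat.cast_nonneg _) (pow_nonneg (Nat.cast_nonneg _) k))
  have hUled : (U:ℝ) ≤ (d:ℝ)^k := by
    have : U ≤ d^k := by
      rw [hU]
      calc ∏ p ∈ d.primeFactors,
            (Finset.univ.image fun i : Fin j => ((h i : ZMod (p ^ k)))).card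
          ≤ ∏ p ∈ d.primeFactors, p^k := by
            apply Finset.prod_le_prod'
            intro p hp
            haveI : NeZero (p^k) :=
              ⟨pow_ne_zero k (Nat.prime_of_mem_primeFactors hp).ne_zero⟩
            calc (Finset.univ.image fun i : Fin j => ((h i : ZMod (p ^ k)))).card
                ≤ (Finset.univ : Finset (ZMod (p^k))).card := Finset.card_le_card
                  (Finset.subset_univ _)
              _ = p^k := by rw [Finset.card_univ, ZMod.card]
        _ = d^k := by rw [Finset.prod_pow, Nat.prod_primeFactors_of_squarefree hd]
    calc (U:ℝ) ≤ ((d^k : ℕ) : ℝ) := by exact_mod_cast this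
      _ = (d:ℝ)^k := by push_cast; rfl
  have hc₁1 : (q.totient : ℝ)/q * ((U:ℝ)/(d:ℝ)^k) ≤ 1 := by
    have h1 : (q.totient : ℝ)/q ≤ 1 := by
      rw [div_le_one (by exact_mod_cast hq)]
      exact_mod_cast Nat.totient_le q
    have h2 : (U:ℝ)/(d:ℝ)^k ≤ 1 := by
      rw [div_le_one (by exact pow_pos (by exact_mod_cast hd0) k)]
      exact hUled
    calc (q.totient : ℝ)/q * ((U:ℝ)/(d:ℝ)^k) ≤ 1 * 1 := by
          apply mul_le_mul h1 h2 (div_nonneg (Nat.cast_nonneg _)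
            (pow_nonneg (Nat.cast_nonneg _) k)) zero_le_one
      _ = 1 := one_mul 1
  have hfloor : |((b:ℝ) - a) - (X₂ - X₁)| ≤ 1 := by
    have f1 : (a:ℝ) ≤ X₁ := Int.floor_le X₁
    have f2 : X₁ < (a:ℝ) + 1 := Int.lt_floor_add_one X₁
    have f3 : (b:ℝ) ≤ X₂ := Int.floor_le X₂
    have f4 : X₂ < (b:ℝ) + 1 := Int.lt_floor_add_one X₂
    rw [abs_le]
    constructor <;> linarith
  have hτ1 : (1:ℝ) ≤ (q.divisors.card : ℝ) := by
    have : 0 < q.divisors.card :=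
      Finset.card_pos.mpr ⟨1, Nat.one_mem_divisors.mpr hq.ne'⟩
    exact_mod_cast this
  have hU1 : (1:ℝ) ≤ (U:ℝ) := by
    have : 0 < U := by
      rw [hU]
      apply Finset.prod_pos
      intro p hp
      apply Finset.card_pos.mpr
      haveI : Nonempty (Fin j) := ⟨⟨0, by omega⟩⟩
      exact (Finset.univ_nonempty).image _
    exact_mod_cast this
  -- final triangle inequality
  set N : ℝ := (((Finset.Ioc a b).filter (fun n : ℤ =>
        Int.gcd n q = 1 ∧ (d : ℤ) ∣ ∏ i, sig k (n + h i * q))).card : ℝ) with hNdef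
  set c₁ : ℝ := (q.totient : ℝ)/q * ((U:ℝ)/(d:ℝ)^k) with hc₁def
  have htri : |N - c₁ * (X₂ - X₁)|
      ≤ |N - c₁ * ((b:ℝ) - a)| + |c₁| * |((b:ℝ) - a) - (X₂ - X₁)| := by
    calc |N - c₁ * (X₂ - X₁)|
        = |(N - c₁ * ((b:ℝ) - a)) + c₁ * (((b:ℝ) - a) - (X₂ - X₁))| := by ring_nf
      _ ≤ |N - c₁ * ((b:ℝ) - a)| + |c₁ * (((b:ℝ) - a) - (X₂ - X₁))| := abs_add_le _ _
      _ = |N - c₁ * ((b:ℝ) - a)| + |c₁| * |((b:ℝ) - a) - (X₂ - X₁)| := by rw [abs_mul]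
  have habs_c₁ : |c₁| = c₁ := abs_of_nonneg hc₁0
  calc |N - c₁ * (X₂ - X₁)|
      ≤ |N - c₁ * ((b:ℝ) - a)| + |c₁| * |((b:ℝ) - a) - (X₂ - X₁)| := htri
    _ ≤ (q.divisors.card : ℝ) * (U:ℝ) + 1 * 1 := by
        apply add_le_add h4R
        rw [habs_c₁]
        apply mul_le_mul hc₁1 hfloor (abs_nonneg _) zero_le_one
    _ ≤ (q.divisors.card : ℝ) * (U:ℝ) + (q.divisors.card : ℝ) * (U:ℝ) := by
        apply add_le_add_right
        nlinarith
    _ = 2 * (q.divisors.card : ℝ) * (U:ℝ) := by ring
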